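/- arXiv:0802.2333 — 2 statements merged into one kernel-verified Lean document; each statement's English description precedes it below -/
import Mathlib

section
/- Let G be a finite group, p a prime, and t an element of G of order p. Let P denote the set of nontrivial elementary abelian p-subgroups A of G such that every order-p element of A is p-central in G and t normalizes A. Then the assignment f(A) = A ∩ C_G(t) satisfies: (i) f(A) is a nontrivial subgroup for every A in P; (ii) f(A) again belongs to P; (iii) f is order-preserving with respect to inclusion, satisfies f(A) ≤ A, and f(f(A)) = f(A); (iv) f is C_G(t)-equivariant, i.e., f(c A c⁻¹) = c f(A) c⁻¹ for every c in C_G(t); (v) the image of f is exactly the set of those A in P with A ≤ C_G(t). -/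
/-- An element `z` of a group is `p`-central if it has order `p` and lies in the
center of some Sylow `p`-subgroup. -/
def IsPCentral (p : ℕ) {G : Type*} [Group G] (z : G) : Prop :=
  orderOf z = p ∧ ∃ S : Sylow p G, z ∈ (S : Subgroup G) ∧ ∀ s ∈ (S : Subgroup G), s * z = z * s

/-- The poset of nontrivial purely `p`-central elementary abelian `p`-subgroups of `G`
normalized by the order-`p` element `t`. -/
def BensonFixedPoset (p : ℕ) {G : Type*} [Group G] (t : G) : Set (Subgroup G) :=
  {A | A ≠ ⊥ ∧ (∀ a ∈ A, ∀ b ∈ A, a * b = b * a) ∧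
    (∀ a ∈ A, a ≠ 1 → orderOf a = p ∧ IsPCentral p a) ∧ t ∈ Subgroup.normalizer (A : Set G)}

/-- Conjugation action of the normalizer on a subgroup. -/
def normConjAction {G : Type*} [Group G] (A : Subgroup G) : MulAction ↥(Subgroup.normalizer (A : Set G)) ↥A where
  smul g a := ⟨(g : G) * a * (g : G)⁻¹, (Subgroup.mem_normalizer_iff.mp g.2 a).mp a.2⟩
  one_smul a := Subtype.ext (by
    show ((1 : ↥(Subgroup.normalizer (A : Set G))) : G) * a * ((1 : ↥(Subgroup.normalizer (A : Set G))) : G)⁻¹ = a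
    simp)
  mul_smul g h a := Subtype.ext (by
    show ((g * h : ↥(Subgroup.normalizer (A : Set G))) : G) * a * ((g * h : ↥(Subgroup.normalizer (A : Set G))) : G)⁻¹ =
      (g : G) * ((h : G) * a * (h : G)⁻¹) * (g : G)⁻¹
    push_cast
    group)

theorem key_fixed {G : Type*} [Group G] [Finite G] {p : ℕ} (hp : p.Prime) (t : G)
    (ht : orderOf t = p) (A : Subgroup G) (hA : A ≠ ⊥)
    (hAp : ∀ a ∈ A, a ≠ 1 → orderOf a = p) (htn : t ∈ Subgroup.normalizer (A : Set G)) :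
    ∃ a : G, a ∈ A ∧ a ≠ 1 ∧ t * a = a * t := by
  haveI : Fact p.Prime := ⟨hp⟩
  have hle : Subgroup.zpowers t ≤ Subgroup.normalizer (A : Set G) := by
    rw [Subgroup.zpowers_le]; exact htn
  letI act : MulAction ↥(Subgroup.normalizer (A : Set G)) ↥A := normConjAction A
  letI : MulAction ↥(Subgroup.zpowers t) ↥A :=
    MulAction.compHom _ (Subgroup.inclusion hle)
  have hsmul : ∀ (g : ↥(Subgroup.zpowers t)) (a : ↥A),
      ((g • a : ↥A) : G) = (g : G) * a * (g : G)⁻¹ := fun g a => rfl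
  have hPH : IsPGroup p ↥(Subgroup.zpowers t) := by
    apply IsPGroup.of_card (n := 1)
    rw [Nat.card_zpowers, ht, pow_one]
  have hPA : IsPGroup p ↥A := by
    intro g
    by_cases h : (g : G) = 1
    · exact ⟨0, by ext; simp [h]⟩
    · refine ⟨1, ?_⟩
      ext
      rw [pow_one, Subgroup.coe_pow, Subgroup.coe_one, ← hAp g g.2 h, pow_orderOf_eq_one]
  have hdvd : p ∣ Nat.card ↥A := by
    haveI : Nontrivial ↥A := A.nontrivial_iff_ne_bot.mpr hA
    obtain ⟨n, hn, hcard⟩ := hPA.nontrivial_iff_card.mp inferInstance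
    exact hcard ▸ dvd_pow_self p hn.ne'
  have h1 : (1 : ↥A) ∈ MulAction.fixedPoints ↥(Subgroup.zpowers t) ↥A := by
    intro g; ext; simp [hsmul]
  obtain ⟨b, hb, hb1⟩ := hPH.exists_fixed_point_of_prime_dvd_card_of_fixed_point ↥A hdvd h1
  have := hb ⟨t, Subgroup.mem_zpowers t⟩
  have hcomm : t * (b : G) * t⁻¹ = b := by
    have h' := congrArg (Subtype.val) this
    rwa [hsmul] at h'
  refine ⟨b, b.2, fun h => hb1 (by ext; simp [h]), ?_⟩
  calc t * (b : G) = t * b * t⁻¹ * t := by group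
    _ = b * t := by rw [hcomm]

theorem conj_comm_of_comm {G : Type*} [Group G] {t c y : G}
    (hct : t * c = c * t) (hy : t * y = y * t) :
    t * (c * y * c⁻¹) = c * y * c⁻¹ * t := by
  have htc : t * c⁻¹ = c⁻¹ * t := by
    have := congrArg (fun x => c⁻¹ * x * c⁻¹) hct
    simpa [mul_assoc] using this.symm
  calc t * (c * y * c⁻¹) = (t * c) * (y * c⁻¹) := by group
    _ = (c * t) * (y * c⁻¹) := by rw [hct]
    _ = c * ((t * y) * c⁻¹) := by group
    _ = c * ((y * t) * c⁻¹) := by rw [hy]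
    _ = (c * y) * (t * c⁻¹) := by group
    _ = (c * y) * (c⁻¹ * t) := by rw [htc]
    _ = c * y * c⁻¹ * t := by group

theorem conj_centralizer_eq {G : Type*} [Group G] (t c : G)
    (hc : c ∈ Subgroup.centralizer {t}) :
    Subgroup.map (MulAut.conj c).toMonoidHom (Subgroup.centralizer {t})
      = Subgroup.centralizer ({t} : Set G) := by
  have hct : t * c = c * t := hc t rfl
  have htc : t * c⁻¹ = c⁻¹ * t := by
    have := congrArg (fun x => c⁻¹ * x * c⁻¹) hct
    simpa [mul_assoc] using this.symm
  ext x
  simp only [Subgroup.mem_map, MulEquiv.coe_toMonoidHom, MulAut.conj_apply,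
    Subgroup.mem_centralizer_iff, Set.mem_singleton_iff, forall_eq]
  constructor
  · rintro ⟨y, hy, rfl⟩
    exact conj_comm_of_comm hct hy
  · intro hx
    refine ⟨c⁻¹ * x * c, ?_, by group⟩
    have := conj_comm_of_comm htc hx
    simpa using this

/-- Properties of the poset map `f(A) = A ∩ C_G(t)` on the fixed points of `t` acting
on the Benson complex. -/
theorem stmt_1 {G : Type*} [Group G] [Finite G] (p : ℕ) (hp : p.Prime)
    (t : G) (ht : orderOf t = p) :
    -- (i) `f(A)` is a nontrivial subgroup
    (∀ A ∈ BensonFixedPoset p t, A ⊓ Subgroup.centralizer {t} ≠ ⊥) ∧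
    -- (ii) `f(A)` again belongs to the poset
    (∀ A ∈ BensonFixedPoset p t, A ⊓ Subgroup.centralizer {t} ∈ BensonFixedPoset p t) ∧
    -- (iii) `f` is order-preserving, `f(A) ≤ A`, and `f(f(A)) = f(A)`
    (∀ A ∈ BensonFixedPoset p t, ∀ B ∈ BensonFixedPoset p t, A ≤ B →
      A ⊓ Subgroup.centralizer {t} ≤ B ⊓ Subgroup.centralizer {t}) ∧
    (∀ A ∈ BensonFixedPoset p t, A ⊓ Subgroup.centralizer {t} ≤ A) ∧
    (∀ A ∈ BensonFixedPoset p t,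
      (A ⊓ Subgroup.centralizer {t}) ⊓ Subgroup.centralizer {t}
        = A ⊓ Subgroup.centralizer {t}) ∧
    -- (iv) `f` is `C_G(t)`-equivariant
    (∀ A ∈ BensonFixedPoset p t, ∀ c ∈ Subgroup.centralizer {t},
      (Subgroup.map (MulAut.conj c).toMonoidHom A) ⊓ Subgroup.centralizer {t}
        = Subgroup.map (MulAut.conj c).toMonoidHom (A ⊓ Subgroup.centralizer {t})) ∧
    -- (v) the image of `f` consists exactly of the members of the poset lying in `C_G(t)`
    (∀ B : Subgroup G,
      (B ∈ BensonFixedPoset p t ∧ B ≤ Subgroup.centralizer {t}) ↔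
        ∃ A ∈ BensonFixedPoset p t, A ⊓ Subgroup.centralizer {t} = B) := by
  have htC : t ∈ Subgroup.centralizer ({t} : Set G) := by
    rw [Subgroup.mem_centralizer_iff]
    rintro h rfl; rfl
  -- (i)
  have hi : ∀ A ∈ BensonFixedPoset p t, A ⊓ Subgroup.centralizer {t} ≠ ⊥ := by
    rintro A ⟨hAbot, hab, hord, htn⟩ hbot
    obtain ⟨a, haA, ha1, hcomm⟩ :=
      key_fixed hp t ht A hAbot (fun a ha h1 => (hord a ha h1).1) htn
    have haC : a ∈ Subgroup.centralizer ({t} : Set G) := by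
      rw [Subgroup.mem_centralizer_iff]
      rintro h rfl; exact hcomm
    exact ha1 ((Subgroup.eq_bot_iff_forall _).mp hbot a (Subgroup.mem_inf.mpr ⟨haA, haC⟩))
  -- (ii)
  have hii : ∀ A ∈ BensonFixedPoset p t,
      A ⊓ Subgroup.centralizer {t} ∈ BensonFixedPoset p t := by
    rintro A hA
    obtain ⟨hAbot, hab, hord, htn⟩ := hA
    refine ⟨hi A ⟨hAbot, hab, hord, htn⟩, ?_, ?_, ?_⟩
    · intro a ha b hb
      exact hab a (Subgroup.mem_inf.mp ha).1 b (Subgroup.mem_inf.mp hb).1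
    · intro a ha h1
      exact hord a (Subgroup.mem_inf.mp ha).1 h1
    · rw [Subgroup.mem_normalizer_iff]
      intro x
      have h1 := Subgroup.mem_normalizer_iff.mp htn x
      have h2 := Subgroup.mem_normalizer_iff.mp (Subgroup.le_normalizer htC) x
      simp only [Subgroup.mem_inf]
      rw [← h1, ← h2]
  refine ⟨hi, hii, fun A _ B _ hAB => inf_le_inf_right _ hAB, fun A _ => inf_le_left,
    fun A _ => by rw [inf_assoc, inf_idem], ?_, ?_⟩
  · -- (iv)
    intro A hA c hc
    rw [Subgroup.map_inf A (Subgroup.centralizer {t}) (MulAut.conj c).toMonoidHom (MulAut.conj c).injective, conj_centralizer_eq t c hc]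
  · -- (v)
    intro B
    constructor
    · rintro ⟨hB, hle⟩
      exact ⟨B, hB, inf_eq_left.mpr hle⟩
    · rintro ⟨A, hA, rfl⟩
      exact ⟨hii A hA, inf_le_right⟩
end

section
/- In the alternating group A_7 on seven letters, every element that is a product of two disjoint 3-cycles is contained in exactly one Sylow 3-subgroup of A_7. -/
set_option maxRecDepth 100000
set_option maxHeartbeats 4000000

open Equiv Equiv.Perm

private def gg : Perm (Fin 7) := List.formPerm [0, 1, 2] * List.formPerm [3, 4, 5]

private lemma cycleType_gg : cycleType gg = {3, 3} := by
  have h1 : (List.formPerm [0, 1, 2] : Perm (Fin 7)).IsCycle :=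
    List.isCycle_formPerm (by decide) (by decide)
  have h2 : (List.formPerm [3, 4, 5] : Perm (Fin 7)).IsCycle :=
    List.isCycle_formPerm (by decide) (by decide)
  have hd : Perm.Disjoint (List.formPerm [0, 1, 2] : Perm (Fin 7)) (List.formPerm [3, 4, 5]) :=
    (List.formPerm_disjoint_iff (by decide) (by decide) (by decide) (by decide)).mpr
      (by intro a ha hb; fin_cases ha <;> simp_all)
  have s1 : (List.formPerm [0, 1, 2] : Perm (Fin 7)).support.card = 3 := by decide
  have s2 : (List.formPerm [3, 4, 5] : Perm (Fin 7)).support.card = 3 := by decide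
  rw [gg, hd.cycleType_mul, h1.cycleType, h2.cycleType, s1, s2]
  rfl

private lemma card_Kgg :
    Fintype.card {x : Perm (Fin 7) // x * gg = gg * x ∧ sign x = 1} = 9 := by
  decide

private lemma factz : (2520 : ℕ).factorization 3 = 2 := by
  have h : (2520 : ℕ) = 3 ^ 2 * 280 := by norm_num
  rw [h, Nat.factorization_mul (by norm_num) (by norm_num),
    Nat.Prime.factorization_pow (by norm_num)]
  have h280 : (280 : ℕ).factorization 3 = 0 := by
    rw [Nat.factorization_eq_zero_iff]
    right; left; decide
  simp [h280]

/-- In the alternating group `A₇`, every element that is a product of two disjoint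
3-cycles (i.e. has cycle type `{3, 3}`) lies in exactly one Sylow 3-subgroup. -/
theorem stmt_17 (g : alternatingGroup (Fin 7))
    (hg : Equiv.Perm.cycleType (g : Equiv.Perm (Fin 7)) = {3, 3}) :
    Nat.card {S : Sylow 3 (alternatingGroup (Fin 7)) //
      g ∈ (S : Subgroup (alternatingGroup (Fin 7)))} = 1 := by
  classical
  -- conjugating element
  obtain ⟨σ, hσ⟩ : IsConj gg (↑g : Perm (Fin 7)) :=
    isConj_of_cycleType_eq (cycleType_gg.trans hg.symm)
  set τ : Perm (Fin 7) := (σ : Perm (Fin 7)) with hτ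
  have hσ' : τ * gg = (↑g : Perm (Fin 7)) * τ := hσ
  have hgeq : (↑g : Perm (Fin 7)) = τ * gg * τ⁻¹ := by
    rw [hσ']; group
  -- subgroups of Perm (Fin 7)
  set K₀ : Subgroup (Perm (Fin 7)) := Subgroup.centralizer {gg} ⊓ alternatingGroup (Fin 7) with hK₀
  set K : Subgroup (Perm (Fin 7)) :=
    Subgroup.centralizer {(↑g : Perm (Fin 7))} ⊓ alternatingGroup (Fin 7) with hK
  have memK₀ : ∀ x : Perm (Fin 7), x ∈ K₀ ↔ (x * gg = gg * x ∧ sign x = 1) := by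
    intro x
    rw [hK₀, Subgroup.mem_inf, Subgroup.mem_centralizer_singleton_iff, mem_alternatingGroup]
  have cardK₀ : Nat.card K₀ = 9 := by
    rw [Nat.card_congr (Equiv.subtypeEquivRight memK₀), Nat.card_eq_fintype_card, card_Kgg]
  -- conjugation carries K₀ to K
  have hKmap : K₀.map (MulAut.conj τ).toMonoidHom = K := by
    ext x
    simp only [Subgroup.mem_map, MulEquiv.coe_toMonoidHom, MulAut.conj_apply]
    constructor
    · rintro ⟨y, hy, rfl⟩
      rw [memK₀] at hy
      refine Subgroup.mem_inf.mpr ⟨?_, ?_⟩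
      · rw [Subgroup.mem_centralizer_singleton_iff, hgeq]
        have h1 := hy.1
        calc τ * y * τ⁻¹ * (τ * gg * τ⁻¹) = τ * (y * gg) * τ⁻¹ := by group
          _ = τ * (gg * y) * τ⁻¹ := by rw [h1]
          _ = τ * gg * τ⁻¹ * (τ * y * τ⁻¹) := by group
      · rw [mem_alternatingGroup]
        simp [hy.2]
    · intro hx
      refine ⟨τ⁻¹ * x * τ, ?_, by group⟩
      rw [memK₀]
      obtain ⟨hx1, hx2⟩ := Subgroup.mem_inf.mp hx
      rw [Subgroup.mem_centralizer_singleton_iff, hgeq] at hx1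
      refine ⟨?_, ?_⟩
      · have h2 : τ * ((τ⁻¹ * x * τ) * gg) * τ⁻¹ = τ * (gg * (τ⁻¹ * x * τ)) * τ⁻¹ := by
          calc τ * ((τ⁻¹ * x * τ) * gg) * τ⁻¹ = x * (τ * gg * τ⁻¹) := by group
            _ = τ * gg * τ⁻¹ * x := hx1
            _ = τ * (gg * (τ⁻¹ * x * τ)) * τ⁻¹ := by group
        exact mul_left_cancel (mul_right_cancel h2)
      · rw [mem_alternatingGroup] at hx2
        simp [hx2]
  have cardK : Nat.card K = 9 := by
    rw [← hKmap, ← cardK₀]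
    exact (Nat.card_congr
      (K₀.equivMapOfInjective _ (MulAut.conj τ).injective).toEquiv).symm
  -- the centralizer of g inside the alternating group
  set Z : Subgroup (alternatingGroup (Fin 7)) := Subgroup.centralizer {g} with hZ
  have hZmap : Z.map (alternatingGroup (Fin 7)).subtype = K := by
    ext x
    simp only [Subgroup.mem_map, Subgroup.coe_subtype]
    constructor
    · rintro ⟨y, hy, rfl⟩
      rw [hZ, Subgroup.mem_centralizer_singleton_iff] at hy
      refine Subgroup.mem_inf.mpr ⟨?_, y.2⟩
      rw [Subgroup.mem_centralizer_singleton_iff]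
      exact congrArg Subtype.val hy
    · intro hx
      obtain ⟨hx1, hx2⟩ := Subgroup.mem_inf.mp hx
      refine ⟨⟨x, hx2⟩, ?_, rfl⟩
      rw [hZ, Subgroup.mem_centralizer_singleton_iff]
      rw [Subgroup.mem_centralizer_singleton_iff] at hx1
      exact Subtype.ext hx1
  have cardZ : Nat.card Z = 9 := by
    rw [← cardK, ← hZmap]
    exact Nat.card_congr
      (Z.equivMapOfInjective _ (alternatingGroup (Fin 7)).subtype_injective).toEquiv
  -- card of the alternating group
  have cardA : Nat.card (alternatingGroup (Fin 7)) = 2520 := by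
    have h2m := two_mul_card_alternatingGroup (α := Fin 7)
    have hp : Fintype.card (Perm (Fin 7)) = 5040 := by
      rw [Fintype.card_perm, Fintype.card_fin]
      decide
    rw [hp] at h2m
    rw [Nat.card_eq_fintype_card]
    omega
  -- every Sylow containing g is Z
  have key : ∀ S : Sylow 3 (alternatingGroup (Fin 7)),
      g ∈ (S : Subgroup (alternatingGroup (Fin 7))) →
      (S : Subgroup (alternatingGroup (Fin 7))) = Z := by
    intro S hgS
    have hcardS : Nat.card (S : Subgroup (alternatingGroup (Fin 7))) = 9 := by
      have hm := Sylow.card_eq_multiplicity S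
      rw [cardA, factz] at hm
      rw [hm]; norm_num
    have hcomm := IsPGroup.commutative_of_card_eq_prime_sq
      (p := 3) (G := (S : Subgroup (alternatingGroup (Fin 7)))) (by rw [hcardS]; norm_num)
    have hle : (S : Subgroup (alternatingGroup (Fin 7))) ≤ Z := by
      intro x hx
      rw [hZ, Subgroup.mem_centralizer_singleton_iff]
      have h := hcomm ⟨x, hx⟩ ⟨g, hgS⟩
      simpa using congrArg Subtype.val h
    exact Subgroup.eq_of_le_of_card_ge hle (by rw [cardZ, hcardS])
  -- existence
  have h3 : orderOf g = 3 := by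
    have hl := lcm_cycleType (↑g : Perm (Fin 7))
    rw [hg] at hl
    rw [← Subgroup.orderOf_coe g, ← hl]
    decide
  have hP : IsPGroup 3 (Subgroup.zpowers g) :=
    IsPGroup.of_card (by rw [Nat.card_zpowers, h3, pow_one])
  obtain ⟨S₀, hS₀⟩ := hP.exists_le_sylow
  have hne : Nonempty {S : Sylow 3 (alternatingGroup (Fin 7)) //
      g ∈ (S : Subgroup (alternatingGroup (Fin 7)))} :=
    ⟨⟨S₀, hS₀ (Subgroup.mem_zpowers g)⟩⟩
  have hss : Subsingleton {S : Sylow 3 (alternatingGroup (Fin 7)) //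
      g ∈ (S : Subgroup (alternatingGroup (Fin 7)))} := by
    constructor
    rintro ⟨S₁, h₁⟩ ⟨S₂, h₂⟩
    exact Subtype.ext (Sylow.ext ((key S₁ h₁).trans (key S₂ h₂).symm))
  rw [Nat.card_eq_one_iff_unique]
  exact ⟨hss, hne⟩
end
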